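/- For the two-source M/G/1/1 queue under the source-agnostic preemptive policy, the first derivative at s = 0 of M̂_{δ_1}(s) = λ_1 M_S(s−λ)/(λ_1 M_S(s−λ) − s) equals 1/(λ_1 L_λ), i.e., the average AoI of source 1 is Δ̂_1 = 1/(λ_1 L_λ). -/

import Mathlib

open MeasureTheory Filter

/-- For the two-source M/G/1/1 queue under the source-agnostic preemptive policy, the
derivative at `s = 0` of `M̂_{δ_1}(s) = λ_1 M_S(s-λ)/(λ_1 M_S(s-λ) - s)` equals
`1/(λ_1 L_λ)` with `L_λ = M_S(-λ)`: the average AoI of source 1 is `Δ̂_1 = 1/(λ_1 L_λ)`. -/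
theorem avg_aoi_source_agnostic {Ω : Type*} [MeasurableSpace Ω] (μ : Measure Ω)
    [IsProbabilityMeasure μ] (S : Ω → ℝ) (hSnn : ∀ ω, 0 ≤ S ω)
    (MS : ℝ → ℝ) (hMS : ∀ r, MS r = ∫ ω, Real.exp (r * S ω) ∂μ)
    (l1 lam : ℝ) (hl1 : 0 < l1) (hlam : 0 < lam)
    (hdiff : ∀ᶠ x in nhds (-lam), DifferentiableAt ℝ MS x)
    (hL : 0 < MS (-lam)) :
    deriv (fun s => l1 * MS (s - lam) / (l1 * MS (s - lam) - s)) 0 =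
      1 / (l1 * MS (-lam)) := by
  have hMSd : DifferentiableAt ℝ MS (-lam) := hdiff.self_of_nhds
  set D := deriv MS (-lam) with hD
  have h1 : HasDerivAt (fun s : ℝ => s - lam) 1 (0:ℝ) := (hasDerivAt_id (0:ℝ)).sub_const lam
  have h2 : HasDerivAt MS D (-lam) := hMSd.hasDerivAt
  have hcomp : HasDerivAt (fun s : ℝ => MS (s - lam)) (D * 1) (0:ℝ) := by
    have h2' : HasDerivAt MS D ((0:ℝ) - lam) := by simpa using h2
    exact h2'.comp (0:ℝ) h1
  have hu : HasDerivAt (fun s : ℝ => l1 * MS (s - lam)) (l1 * (D * 1)) (0:ℝ) := hcomp.const_mul l1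
  have hv : HasDerivAt (fun s : ℝ => l1 * MS (s - lam) - s) (l1 * (D * 1) - 1) (0:ℝ) :=
    hu.sub (hasDerivAt_id (0:ℝ))
  have hv0 : l1 * MS ((0:ℝ) - lam) - 0 ≠ 0 := by
    rw [zero_sub, sub_zero]; positivity
  have hdiv := (hu.div hv hv0)
  rw [show (fun s : ℝ => l1 * MS (s - lam) / (l1 * MS (s - lam) - s)) = ((fun s => l1 * MS (s - lam)) / fun s => l1 * MS (s - lam) - s) from rfl, hdiv.deriv]
  rw [zero_sub, sub_zero] at *
  have hL0 : l1 * MS (-lam) ≠ 0 := by positivity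
  field_simp
  ring
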